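/- Let s, u ∈ ℂ with s ≠ 0, let z = 2 + (2 − s² − s⁻²)u + u², and let n be an integer. If the Riley condition S_n(z) = (u² − (u+1)(s² + s⁻² − 3))·S_{n−1}(z) holds, then (u + 2 − s² − s⁻²)·(u² − (s² + s⁻² − 2)(u + 1))·S_{n−1}(z)² = 1. -/

import Mathlib

/-- Let `s, u ∈ ℂ` with `s ≠ 0`, let `z = 2 + (2 - s² - s⁻²)u + u²`, and let `n` be an
integer. If the Riley condition `S n = (u² - (u+1)(s² + s⁻² - 3)) * S (n-1)` holds
(where `S` denotes the Chebyshev polynomials of the second kind evaluated at `z`), then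
`(u + 2 - s² - s⁻²) * (u² - (s² + s⁻² - 2)(u+1)) * S (n-1)² = 1`. -/
theorem riley_square_identity (s u z : ℂ) (hs : s ≠ 0)
    (hz : z = 2 + (2 - s ^ 2 - s⁻¹ ^ 2) * u + u ^ 2)
    (S : ℤ → ℂ) (hS0 : S 0 = 1) (hS1 : S 1 = z)
    (hSrec : ∀ k : ℤ, S k = z * S (k - 1) - S (k - 2))
    (n : ℤ)
    (hRiley : S n = (u ^ 2 - (u + 1) * (s ^ 2 + s⁻¹ ^ 2 - 3)) * S (n - 1)) :
    (u + 2 - s ^ 2 - s⁻¹ ^ 2) * (u ^ 2 - (s ^ 2 + s⁻¹ ^ 2 - 2) * (u + 1)) *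
      (S (n - 1)) ^ 2 = 1 := by
  have hSm1 : S (-1) = 0 := by
    have h := hSrec 1
    norm_num at h
    rw [hS1, hS0] at h
    linear_combination h
  have key : ∀ k : ℤ, S k ^ 2 - z * S k * S (k - 1) + S (k - 1) ^ 2 = 1 := by
    intro k
    induction k using Int.induction_on with
    | zero => norm_num [hS0, hSm1]
    | succ m ih =>
        have h := hSrec (m + 1)
        have e1 : (m : ℤ) + 1 - 1 = m := by ring
        have e2 : (m : ℤ) + 1 - 2 = m - 1 := by ring
        rw [e1, e2] at h
        rw [h, e1]
        linear_combination ih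
    | pred m ih =>
        have h := hSrec (-m)
        have e1 : (-(m : ℤ)) - 1 = -m - 1 := by ring
        have e2 : (-(m : ℤ)) - 2 = -m - 1 - 1 := by ring
        rw [e2] at h
        rw [show (-(m : ℤ) - 1 : ℤ) = -m - 1 from rfl] at *
        linear_combination ih + (S (-m - 1 - 1) - S (-m)) * h
  have hk := key n
  rw [hRiley] at hk
  have hfac : (u + 2 - s ^ 2 - s⁻¹ ^ 2) * (u ^ 2 - (s ^ 2 + s⁻¹ ^ 2 - 2) * (u + 1)) =
      (u ^ 2 - (u + 1) * (s ^ 2 + s⁻¹ ^ 2 - 3)) ^ 2 -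
        z * (u ^ 2 - (u + 1) * (s ^ 2 + s⁻¹ ^ 2 - 3)) + 1 := by
    rw [hz]
    field_simp
    ring
  rw [hfac]
  linear_combination hk
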